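/- For every real t > 0 and every positive integer d, the ratio F_t(x) / (x^{(d−1)/d} · exp(t·x^{1/d})) tends to d/t as x → ∞. -/

import Mathlib

open MeasureTheory Real Filter

/-- `F t d x = ∫₀ˣ (exp (t y^(1/d)) − 1) dy`. -/
noncomputable def F (t : ℝ) (d : ℕ) (x : ℝ) : ℝ :=
  ∫ y in (0:ℝ)..x, (Real.exp (t * y ^ ((1:ℝ) / d)) - 1)

/-- L'Hôpital-type lemma (∞/∞ form). -/

lemma lhopital_aux {f g f' g' : ℝ → ℝ} {L A : ℝ}
    (hf : ∀ x ∈ Set.Ici A, HasDerivAt f (f' x) x)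
    (hg : ∀ x ∈ Set.Ici A, HasDerivAt g (g' x) x)
    (hg' : ∀ x ∈ Set.Ici A, 0 < g' x)
    (hgtop : Tendsto g atTop atTop)
    (hratio : Tendsto (fun x => f' x / g' x) atTop (nhds L)) :
    Tendsto (fun x => f x / g x) atTop (nhds L) := by
  rw [Metric.tendsto_nhds]
  intro ε hε
  have hε2 : 0 < ε / 2 := by linarith
  have h1 : ∀ᶠ x in atTop, dist (f' x / g' x) L < ε / 2 :=
    (Metric.tendsto_nhds.1 hratio) _ hε2
  obtain ⟨B₀, hB₀⟩ := eventually_atTop.1 h1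
  set B := max A B₀ with hB
  have hBA : A ≤ B := le_max_left _ _
  have key : ∀ x ∈ Set.Ici B, |f' x - L * g' x| ≤ ε / 2 * g' x := by
    intro x hx
    have hxA : x ∈ Set.Ici A := le_trans hBA hx
    have hg'x := hg' x hxA
    have hd := hB₀ x (le_trans (le_max_right _ _) hx)
    rw [Real.dist_eq] at hd
    have heq : f' x - L * g' x = (f' x / g' x - L) * g' x := by field_simp
    rw [heq, abs_mul, abs_of_pos hg'x]
    exact mul_le_mul_of_nonneg_right hd.le hg'x.le
  have hconv : Convex ℝ (Set.Ici B) := convex_Ici B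
  have hint : interior (Set.Ici B) = Set.Ioi B := interior_Ici
  have hfB : ∀ x ∈ Set.Ici B, HasDerivAt f (f' x) x := fun x hx => hf x (le_trans hBA hx)
  have hgB : ∀ x ∈ Set.Ici B, HasDerivAt g (g' x) x := fun x hx => hg x (le_trans hBA hx)
  have mono1 : MonotoneOn (fun x => (L + ε / 2) * g x - f x) (Set.Ici B) := by
    apply monotoneOn_of_deriv_nonneg hconv
    · intro x hx
      exact (((hgB x hx).const_mul _).sub (hfB x hx)).continuousAt.continuousWithinAt
    · intro x hx
      rw [hint] at hx
      exact (((hgB x (Set.Ioi_subset_Ici_self hx)).const_mul _).sub (hfB x (Set.Ioi_subset_Ici_self hx))).differentiableAt.differentiableWithinAt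
    · intro x hx
      rw [hint] at hx
      rw [(((hgB x (Set.Ioi_subset_Ici_self hx)).const_mul _).fun_sub (hfB x (Set.Ioi_subset_Ici_self hx))).deriv]
      have h := abs_le.1 (key x (Set.Ioi_subset_Ici_self hx))
      nlinarith [h.2]
  have mono2 : MonotoneOn (fun x => f x - (L - ε / 2) * g x) (Set.Ici B) := by
    apply monotoneOn_of_deriv_nonneg hconv
    · intro x hx
      exact ((hfB x hx).sub ((hgB x hx).const_mul _)).continuousAt.continuousWithinAt
    · intro x hx
      rw [hint] at hx
      exact ((hfB x (Set.Ioi_subset_Ici_self hx)).sub ((hgB x (Set.Ioi_subset_Ici_self hx)).const_mul _)).differentiableAt.differentiableWithinAt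
    · intro x hx
      rw [hint] at hx
      rw [((hfB x (Set.Ioi_subset_Ici_self hx)).fun_sub ((hgB x (Set.Ioi_subset_Ici_self hx)).const_mul _)).deriv]
      have h := abs_le.1 (key x (Set.Ioi_subset_Ici_self hx))
      nlinarith [h.1]
  obtain ⟨C, hC⟩ : ∃ C, C = |f B - L * g B| + ε / 2 * |g B| := ⟨_, rfl⟩
  have hC0 : 0 ≤ C := by rw [hC]; positivity
  have hglarge : ∀ᶠ x in atTop, max 1 (2 * C / ε) < g x := hgtop.eventually_gt_atTop _
  filter_upwards [hglarge, eventually_ge_atTop B] with x hgx hxB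
  have hgxpos : 0 < g x := by
    have := lt_of_le_of_lt (le_max_left 1 (2 * C / ε)) hgx; linarith
  have e1 := mono1 (le_refl B) hxB hxB
  have e2 := mono2 (le_refl B) hxB hxB
  simp only at e1 e2
  have hm1 : ε / 2 * (-|g B|) ≤ ε / 2 * g B :=
    mul_le_mul_of_nonneg_left (neg_abs_le (g B)) hε2.le
  have hm2 : ε / 2 * g B ≤ ε / 2 * |g B| :=
    mul_le_mul_of_nonneg_left (le_abs_self (g B)) hε2.le
  have habs : |f x - L * g x| ≤ ε / 2 * g x + C := by
    rw [abs_le]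
    constructor
    · nlinarith [neg_abs_le (f B - L * g B), le_abs_self (f B - L * g B)]
    · nlinarith [neg_abs_le (f B - L * g B), le_abs_self (f B - L * g B)]
  rw [Real.dist_eq]
  have hrw : f x / g x - L = (f x - L * g x) / g x := by field_simp
  rw [hrw, abs_div, abs_of_pos hgxpos, div_lt_iff₀ hgxpos]
  have hgx2 : 2 * C / ε < g x := lt_of_le_of_lt (le_max_right _ _) hgx
  rw [div_lt_iff₀ hε] at hgx2
  have hfin : C < ε / 2 * g x := by nlinarith
  calc |f x - L * g x| ≤ ε / 2 * g x + C := habs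
    _ < ε / 2 * g x + ε / 2 * g x := by linarith
    _ = ε * g x := by ring

/-- For every real `t > 0` and every positive integer `d`, the ratio
`F_t(x) / (x^((d−1)/d) · exp(t·x^(1/d)))` tends to `d/t` as `x → ∞`. -/
theorem F_asymptotics (t : ℝ) (ht : 0 < t) (d : ℕ) (hd : 0 < d) :
    Tendsto (fun x : ℝ =>
        F t d x / (x ^ (((d:ℝ) - 1) / d) * Real.exp (t * x ^ ((1:ℝ) / d))))
      atTop (nhds ((d : ℝ) / t)) := by
  have hd0 : (0:ℝ) < d := Nat.cast_pos.2 hd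
  set b : ℝ := (1:ℝ) / d with hbdef
  set a : ℝ := ((d:ℝ) - 1) / d with hadef
  have hb : 0 < b := by positivity
  have ha : 0 ≤ a := by
    rw [hadef]
    apply div_nonneg _ hd0.le
    have : (1:ℝ) ≤ d := by exact_mod_cast hd
    linarith
  have hab1 : a - 1 = -b := by rw [hadef, hbdef]; field_simp; ring
  have hab0 : a + (b - 1) = 0 := by rw [hadef, hbdef]; field_simp; ring
  have cont : Continuous (fun y : ℝ => Real.exp (t * y ^ b) - 1) :=
    ((continuous_const.mul (Real.continuous_rpow_const hb.le)).rexp).sub continuous_const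
  -- derivatives
  have hf : ∀ x ∈ Set.Ici (1:ℝ),
      HasDerivAt (F t d) (Real.exp (t * x ^ b) - 1) x := by
    intro x _
    exact intervalIntegral.integral_hasDerivAt_right
      (cont.intervalIntegrable _ _)
      (cont.stronglyMeasurable.stronglyMeasurableAtFilter)
      cont.continuousAt
  have hg : ∀ x ∈ Set.Ici (1:ℝ),
      HasDerivAt (fun x : ℝ => x ^ a * Real.exp (t * x ^ b))
        ((a * x ^ (-b) + t * b) * Real.exp (t * x ^ b)) x := by
    intro x hx
    have hx0 : (0:ℝ) < x := lt_of_lt_of_le one_pos hx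
    have h1 : HasDerivAt (fun x : ℝ => x ^ a) (a * x ^ (a - 1)) x :=
      Real.hasDerivAt_rpow_const (Or.inl hx0.ne')
    have h2 : HasDerivAt (fun x : ℝ => x ^ b) (b * x ^ (b - 1)) x :=
      Real.hasDerivAt_rpow_const (Or.inl hx0.ne')
    have h4 : HasDerivAt (fun x : ℝ => Real.exp (t * x ^ b))
        (Real.exp (t * x ^ b) * (t * (b * x ^ (b - 1)))) x := (h2.const_mul t).exp
    have h5 := h1.fun_mul h4
    refine h5.congr_deriv ?_
    have e2 : x ^ a * x ^ (b - 1) = 1 := by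
      rw [← Real.rpow_add hx0, hab0, Real.rpow_zero]
    rw [hab1]
    rw [show x ^ a * (Real.exp (t * x ^ b) * (t * (b * x ^ (b - 1))))
        = (x ^ a * x ^ (b - 1)) * (t * b * Real.exp (t * x ^ b)) from by ring, e2]
    ring
  have hg' : ∀ x ∈ Set.Ici (1:ℝ), 0 < (a * x ^ (-b) + t * b) * Real.exp (t * x ^ b) := by
    intro x hx
    have hx0 : (0:ℝ) < x := lt_of_lt_of_le one_pos hx
    apply mul_pos _ (Real.exp_pos _)
    exact add_pos_of_nonneg_of_pos
      (mul_nonneg ha (Real.rpow_pos_of_pos hx0 _).le) (mul_pos ht hb)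
  have hexp : Tendsto (fun x : ℝ => Real.exp (t * x ^ b)) atTop atTop :=
    Real.tendsto_exp_atTop.comp (Tendsto.const_mul_atTop ht (tendsto_rpow_atTop hb))
  have hgtop : Tendsto (fun x : ℝ => x ^ a * Real.exp (t * x ^ b)) atTop atTop := by
    apply tendsto_atTop_mono' atTop _ hexp
    filter_upwards [eventually_ge_atTop (1:ℝ)] with x hx
    have hxa : (1:ℝ) ≤ x ^ a := Real.one_le_rpow hx ha
    exact le_mul_of_one_le_left (Real.exp_pos _).le hxa
  have hratio : Tendsto (fun x : ℝ =>
      (Real.exp (t * x ^ b) - 1) / ((a * x ^ (-b) + t * b) * Real.exp (t * x ^ b)))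
      atTop (nhds ((d:ℝ) / t)) := by
    have lim1 : Tendsto (fun x : ℝ => 1 - Real.exp (-(t * x ^ b))) atTop (nhds (1 - 0)) := by
      apply tendsto_const_nhds.sub
      exact Real.tendsto_exp_atBot.comp
        (tendsto_neg_atTop_atBot.comp (Tendsto.const_mul_atTop ht (tendsto_rpow_atTop hb)))
    have lim2 : Tendsto (fun x : ℝ => a * x ^ (-b) + t * b) atTop (nhds (a * 0 + t * b)) :=
      ((tendsto_rpow_neg_atTop hb).const_mul a).add tendsto_const_nhds
    have hne : a * 0 + t * b ≠ 0 := by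
      have : 0 < t * b := mul_pos ht hb
      simp only [mul_zero, zero_add]
      exact this.ne'
    have lim3 := lim1.div lim2 hne
    have hval : (1 - 0) / (a * 0 + t * b) = (d:ℝ) / t := by
      rw [hbdef]; field_simp; ring
    rw [hval] at lim3
    apply lim3.congr'
    filter_upwards [eventually_ge_atTop (1:ℝ)] with x hx
    have hx0 : (0:ℝ) < x := lt_of_lt_of_le one_pos hx
    have hE : (0:ℝ) < Real.exp (t * x ^ b) := Real.exp_pos _
    have hc : 0 < a * x ^ (-b) + t * b := add_pos_of_nonneg_of_pos
      (mul_nonneg ha (Real.rpow_pos_of_pos hx0 _).le) (mul_pos ht hb)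
    simp only [Pi.div_apply]
    rw [Real.exp_neg, mul_comm (a * x ^ (-b) + t * b), ← div_div]
    congr 1
    rw [sub_div, div_self hE.ne', one_div]
  exact lhopital_aux hf hg hg' hgtop hratio
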